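/- arXiv:1510.03045 — 2 statements merged into one kernel-verified Lean document; each statement's English description precedes it below -/
import Mathlib

section
/- For every strategy f there exists a strategy g satisfying Property 1 (for every index j : Fin n the map y ↦ g y j is injective) such that Value(g) ≥ Value(f). -/
open Finset

/-- Similarity: number of positions where two strings agree. -/
def Sim (n d : ℕ) (z x : Fin n → Fin d) : ℕ :=
  (Finset.univ.filter fun j => z j = x j).card

/-- Best approximation of a word `x` by the rows of strategy `g`. -/
def maxSim (n d : ℕ) (g : Fin d → Fin n → Fin d) (x : Fin n → Fin d) : ℕ :=
  Finset.univ.sup fun y => Sim n d (g y) x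

/-- Value (average success probability) of a strategy, assuming Alice's
optimal encoding. -/
def Value (n d : ℕ) (g : Fin d → Fin n → Fin d) : ℚ :=
  (∑ x : Fin n → Fin d, (maxSim n d g x : ℚ)) / (n * d ^ n)

/-- A strategy is optimal if no strategy has a larger value. -/
def IsOptimal (n d : ℕ) (g : Fin d → Fin n → Fin d) : Prop :=
  ∀ f : Fin d → Fin n → Fin d, Value n d f ≤ Value n d g

/-- Property 1: every column of the decoding matrix is injective. -/
def Property1 (n d : ℕ) (g : Fin d → Fin n → Fin d) : Prop :=
  ∀ j : Fin n, Function.Injective fun y => g y j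

/-- Property 2: at most one column of the decoding matrix fails to be injective. -/
def Property2 (n d : ℕ) (g : Fin d → Fin n → Fin d) : Prop :=
  ∀ j₁ j₂ : Fin n, ¬ Function.Injective (fun y => g y j₁) →
    ¬ Function.Injective (fun y => g y j₂) → j₁ = j₂

lemma sim_split {n d : ℕ} (j₀ : Fin n) (z x : Fin n → Fin d) :
    Sim n d z x = (if z j₀ = x j₀ then 1 else 0)
      + ∑ j : {j : Fin n // j ≠ j₀}, (if z j = x j then 1 else 0) := by
  rw [Sim, Finset.card_filter,
    ← Finset.add_sum_erase _ _ (Finset.mem_univ j₀)]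
  congr 1
  exact Finset.sum_subtype (univ.erase j₀) (fun j => by simp [Finset.mem_erase]) _

lemma key {d : ℕ} (hd : 0 < d) (S : Fin d → ℕ) (c : Fin d → Fin d) :
    ∑ a : Fin d, univ.sup (fun y => (if c y = a then 1 else 0) + S y)
      ≤ ∑ a : Fin d, univ.sup (fun y => (if y = a then 1 else 0) + S y) := by
  haveI : Nonempty (Fin d) := ⟨⟨0, hd⟩⟩
  set M := univ.sup S with hM
  obtain ⟨y₀, -, hy₀⟩ := Finset.exists_mem_eq_sup univ univ_nonempty S
  set T : Finset (Fin d) := univ.filter (fun y => S y = M) with hT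
  calc ∑ a : Fin d, univ.sup (fun y => (if c y = a then 1 else 0) + S y)
      ≤ ∑ a : Fin d, ((if a ∈ T.image c then 1 else 0) + M) := by
        refine Finset.sum_le_sum fun a _ => Finset.sup_le fun y _ => ?_
        by_cases h1 : c y = a
        · by_cases h2 : S y = M
          · have : a ∈ T.image c := Finset.mem_image.mpr ⟨y, by simp [hT, h2], h1⟩
            simp [h1, h2, this]
          · have : S y < M := lt_of_le_of_ne (Finset.le_sup (Finset.mem_univ y)) h2
            simp only [h1, if_pos]
            omega
        · rw [if_neg h1, zero_add]
          have : S y ≤ M := Finset.le_sup (Finset.mem_univ y)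
          exact this.trans (Nat.le_add_left M _)
    _ ≤ ∑ a : Fin d, ((if a ∈ T then 1 else 0) + M) := by
        rw [Finset.sum_add_distrib, Finset.sum_add_distrib]
        refine Nat.add_le_add_right ?_ _
        rw [Finset.sum_ite_mem, Finset.sum_ite_mem, univ_inter, univ_inter,
          Finset.sum_const, Finset.sum_const]
        simpa using Finset.card_image_le
    _ ≤ ∑ a : Fin d, univ.sup (fun y => (if y = a then 1 else 0) + S y) := by
        refine Finset.sum_le_sum fun a _ => ?_
        by_cases h : a ∈ T
        · have : S a = M := (Finset.mem_filter.mp h).2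
          calc (if a ∈ T then 1 else 0) + M = (if a = a then 1 else 0) + S a := by simp [h, this]
            _ ≤ _ := Finset.le_sup (f := fun y => (if y = a then 1 else 0) + S y) (Finset.mem_univ a)
        · calc (if a ∈ T then 1 else 0) + M = S y₀ := by simp [h, ← hy₀]; exact hM
            _ ≤ (if y₀ = a then 1 else 0) + S y₀ := by omega
            _ ≤ _ := Finset.le_sup (f := fun y => (if y = a then 1 else 0) + S y) (Finset.mem_univ y₀)

lemma step {n d : ℕ} (hd : 0 < d) (f : Fin d → Fin n → Fin d) (j₀ : Fin n) :
    ∑ x : Fin n → Fin d, maxSim n d f x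
      ≤ ∑ x : Fin n → Fin d, maxSim n d (fun y j => if j = j₀ then y else f y j) x := by
  set e := Equiv.funSplitAt j₀ (Fin d) with he
  rw [← Equiv.sum_comp e.symm (maxSim n d f), ← Equiv.sum_comp e.symm
    (maxSim n d (fun y j => if j = j₀ then y else f y j)), Fintype.sum_prod_type_right,
    Fintype.sum_prod_type_right]
  refine Finset.sum_le_sum fun x' _ => ?_
  have hx0 : ∀ a : Fin d, e.symm (a, x') j₀ = a := fun a => by
    simp [he, Equiv.funSplitAt_symm_apply]
  have hx : ∀ (a : Fin d) (j : {j : Fin n // j ≠ j₀}), e.symm (a, x') j = x' j := fun a j => by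
    simp [he, Equiv.funSplitAt_symm_apply, j.2]
  set S : Fin d → ℕ := fun y => ∑ j : {j : Fin n // j ≠ j₀}, (if f y j = x' j then 1 else 0)
    with hS
  have h1 : ∀ a : Fin d, maxSim n d f (e.symm (a, x'))
      = univ.sup (fun y => (if f y j₀ = a then 1 else 0) + S y) := by
    intro a
    rw [maxSim]
    congr 1
    funext y
    rw [sim_split j₀, hx0]
    congr 1
    exact Finset.sum_congr rfl fun j _ => by rw [hx]
  have h2 : ∀ a : Fin d, maxSim n d (fun y j => if j = j₀ then y else f y j) (e.symm (a, x'))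
      = univ.sup (fun y => (if y = a then 1 else 0) + S y) := by
    intro a
    rw [maxSim]
    congr 1
    funext y
    rw [sim_split j₀, hx0]
    simp only [if_pos rfl]
    congr 1
    refine Finset.sum_congr rfl fun j _ => by rw [hx, if_neg j.2]
  simp only [h1, h2]
  exact key hd S (fun y => f y j₀)

lemma chain {n d : ℕ} (hd : 0 < d) (f : Fin d → Fin n → Fin d) :
    ∀ k : ℕ, k ≤ n → ∑ x : Fin n → Fin d, maxSim n d f x
      ≤ ∑ x : Fin n → Fin d, maxSim n d (fun y j => if (j : ℕ) < k then y else f y j) x := by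
  intro k
  induction k with
  | zero =>
    intro _
    have : (fun (y : Fin d) (j : Fin n) => if (j : ℕ) < 0 then y else f y j) = f := by
      funext y j; simp
    rw [this]
  | succ k ih =>
    intro hk
    have hkn : k < n := hk
    refine (ih (Nat.le_of_succ_le hk)).trans ?_
    have := step hd (fun y j => if (j : ℕ) < k then y else f y j) ⟨k, hkn⟩
    have heq : (fun (y : Fin d) (j : Fin n) =>
        if j = (⟨k, hkn⟩ : Fin n) then y else if (j : ℕ) < k then y else f y j)
        = fun (y : Fin d) (j : Fin n) => if (j : ℕ) < k + 1 then y else f y j := by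
      funext y j
      by_cases h : j = (⟨k, hkn⟩ : Fin n)
      · subst h; simp
      · have : (j : ℕ) ≠ k := fun hc => h (Fin.ext hc)
        rw [if_neg h]
        by_cases h2 : (j : ℕ) < k
        · rw [if_pos h2, if_pos (by omega)]
        · rw [if_neg h2, if_neg (by omega)]
    rwa [heq] at this


/-- every strategy is dominated by some strategy satisfying
Property 1. -/
theorem stmt_4 (n d : ℕ) (hn : 1 ≤ n) (hd : 2 ≤ d)
    (f : Fin d → Fin n → Fin d) :
    ∃ g : Fin d → Fin n → Fin d, Property1 n d g ∧ Value n d f ≤ Value n d g := by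
  refine ⟨fun y _ => y, fun j => fun a b h => h, ?_⟩
  have hd0 : 0 < d := by omega
  have hsum := chain hd0 f n le_rfl
  have hg : (fun (y : Fin d) (j : Fin n) => if (j : ℕ) < n then y else f y j)
      = fun y _ => y := by
    funext y j; rw [if_pos j.isLt]
  rw [hg] at hsum
  rw [Value, Value]
  have hden : (0 : ℚ) < (n : ℚ) * (d : ℚ) ^ n := by positivity
  rw [div_le_div_iff₀ hden hden]
  have : (∑ x : Fin n → Fin d, (maxSim n d f x : ℚ))
      ≤ ∑ x : Fin n → Fin d, (maxSim n d (fun y _ => y) x : ℚ) := by exact_mod_cast hsum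
  exact mul_le_mul_of_nonneg_right this hden.le
end

section
/- Let n = 2 and d ≥ 2. Then every strategy g satisfying Property 2 is optimal, and moreover for every strategy f not satisfying Property 2 and every strategy g satisfying Property 2 one has Value(f) < Value(g). -/
open Finset

section Aux

variable {d : ℕ}

lemma sim_two (z x : Fin 2 → Fin d) :
    Sim 2 d z x = (if z 0 = x 0 then 1 else 0) + (if z 1 = x 1 then 1 else 0) := by
  rw [Sim, Finset.card_filter, Fin.sum_univ_two]

lemma ext_two {z x : Fin 2 → Fin d} (h0 : z 0 = x 0) (h1 : z 1 = x 1) : z = x :=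
  funext fun i => by fin_cases i <;> assumption

lemma maxSim_eq (g : Fin d → Fin 2 → Fin d) (x : Fin 2 → Fin d) :
    maxSim 2 d g x =
      (if ∃ y, g y 0 = x 0 ∨ g y 1 = x 1 then 1 else 0) +
      (if ∃ y, g y = x then 1 else 0) := by
  unfold maxSim
  by_cases h2 : ∃ y, g y = x
  · obtain ⟨y, hy⟩ := h2
    rw [if_pos ⟨y, Or.inl (by rw [hy])⟩, if_pos ⟨y, hy⟩]
    apply le_antisymm
    · refine Finset.sup_le fun z _ => ?_
      rw [sim_two]; split <;> split <;> simp
    · calc (1 + 1 : ℕ) = Sim 2 d (g y) x := by rw [sim_two, hy]; simp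
        _ ≤ _ := Finset.le_sup (f := fun y => Sim 2 d (g y) x) (Finset.mem_univ y)
  · rw [if_neg h2]
    by_cases h1 : ∃ y, g y 0 = x 0 ∨ g y 1 = x 1
    · obtain ⟨y, hy⟩ := h1
      rw [if_pos ⟨y, hy⟩]
      apply le_antisymm
      · refine Finset.sup_le fun z _ => ?_
        rw [sim_two]
        by_cases hz0 : g z 0 = x 0 <;> by_cases hz1 : g z 1 = x 1
        · exact absurd (ext_two hz0 hz1) fun h => h2 ⟨z, h⟩
        all_goals simp [hz0, hz1]
      · have hy1 : 1 ≤ Sim 2 d (g y) x := by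
          rw [sim_two]; rcases hy with h | h <;> simp [h]
        simpa using le_trans hy1
          (Finset.le_sup (f := fun y => Sim 2 d (g y) x) (Finset.mem_univ y))
    · rw [if_neg h1]
      push_neg at h1
      refine le_antisymm (Finset.sup_le fun z _ => ?_) (Nat.zero_le _)
      rw [sim_two]
      simp [(h1 z).1, (h1 z).2]

lemma sum_maxSim (g : Fin d → Fin 2 → Fin d) :
    ∑ x : Fin 2 → Fin d, maxSim 2 d g x =
      (univ.filter fun x : Fin 2 → Fin d => ∃ y, g y 0 = x 0 ∨ g y 1 = x 1).card
        + (Finset.image g univ).card := by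
  simp only [maxSim_eq, Finset.sum_add_distrib]
  congr 1
  · rw [Finset.card_filter]
  · have himg : Finset.image g univ
        = univ.filter fun x : Fin 2 → Fin d => ∃ y, g y = x := by
      ext x; simp
    rw [himg, Finset.card_filter]

lemma card_fun_two : Fintype.card (Fin 2 → Fin d) = d ^ 2 := by
  simp [Fintype.card_fun]

lemma sum_le (f : Fin d → Fin 2 → Fin d) :
    ∑ x : Fin 2 → Fin d, maxSim 2 d f x ≤ d ^ 2 + d := by
  rw [sum_maxSim]
  have h1 := Finset.card_filter_le (univ : Finset (Fin 2 → Fin d))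
      (fun x => ∃ y, f y 0 = x 0 ∨ f y 1 = x 1)
  have h2 := Finset.card_image_le (f := f) (s := univ)
  simp only [Finset.card_univ, card_fun_two, Fintype.card_fin] at h1 h2
  exact add_le_add h1 h2

lemma sum_eq_of_prop2 (g : Fin d → Fin 2 → Fin d) (hg : Property2 2 d g) :
    ∑ x : Fin 2 → Fin d, maxSim 2 d g x = d ^ 2 + d := by
  have hinj : Function.Injective (fun y => g y 0) ∨
      Function.Injective (fun y => g y 1) := by
    by_contra h; push_neg at h
    exact absurd (hg 0 1 h.1 h.2) (by decide)
  have main : ∀ j : Fin 2, Function.Injective (fun y => g y j) →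
      ∑ x : Fin 2 → Fin d, maxSim 2 d g x =
        (univ.filter fun x : Fin 2 → Fin d =>
          ∃ y, g y 0 = x 0 ∨ g y 1 = x 1).card + d := by
    intro j hj
    have hginj : Function.Injective g := fun y y' h => hj (congrFun h j)
    rw [sum_maxSim, Finset.card_image_of_injective _ hginj, Finset.card_univ,
      Fintype.card_fin]
  have hfull : ∀ j : Fin 2, Function.Injective (fun y => g y j) →
      ∀ x : Fin 2 → Fin d, ∃ y, g y j = x j := by
    intro j hj x
    exact Finite.injective_iff_surjective.mp hj (x j)
  rcases hinj with hj | hj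
  · rw [main 0 hj, Finset.filter_true_of_mem fun x _ =>
      (hfull 0 hj x).imp fun y hy => Or.inl hy, Finset.card_univ, card_fun_two]
  · rw [main 1 hj, Finset.filter_true_of_mem fun x _ =>
      (hfull 1 hj x).imp fun y hy => Or.inr hy, Finset.card_univ, card_fun_two]

lemma sum_lt_of_not_prop2 (hd : 2 ≤ d) (f : Fin d → Fin 2 → Fin d)
    (hf : ¬ Property2 2 d f) :
    ∑ x : Fin 2 → Fin d, maxSim 2 d f x < d ^ 2 + d := by
  rw [Property2] at hf
  push_neg at hf
  obtain ⟨j₁, j₂, h₁, h₂, hne⟩ := hf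
  have h0 : ¬ Function.Injective (fun y => f y 0) ∧
      ¬ Function.Injective (fun y => f y 1) := by
    fin_cases j₁ <;> fin_cases j₂ <;>
      first
        | exact absurd rfl hne
        | exact ⟨h₁, h₂⟩
        | exact ⟨h₂, h₁⟩
  obtain ⟨u₀, hu⟩ : ∃ u, ∀ y, f y 0 ≠ u := by
    by_contra h; push_neg at h
    exact h0.1 (Finite.injective_iff_surjective.mpr fun u => h u)
  obtain ⟨v₀, hv⟩ : ∃ v, ∀ y, f y 1 ≠ v := by
    by_contra h; push_neg at h
    exact h0.2 (Finite.injective_iff_surjective.mpr fun v => h v)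
  set x₀ : Fin 2 → Fin d := ![u₀, v₀] with hx₀def
  have hx₀ : x₀ ∉ univ.filter
      (fun x : Fin 2 → Fin d => ∃ y, f y 0 = x 0 ∨ f y 1 = x 1) := by
    simp only [Finset.mem_filter, Finset.mem_univ, true_and, not_exists]
    intro y hy
    rcases hy with h | h
    · exact hu y (by simpa [hx₀def] using h)
    · exact hv y (by simpa [hx₀def] using h)
  have hsub : (univ.filter
      (fun x : Fin 2 → Fin d => ∃ y, f y 0 = x 0 ∨ f y 1 = x 1)) ⊆
      univ.erase x₀ := fun x hx =>
    Finset.mem_erase.mpr ⟨fun h => hx₀ (h ▸ hx), Finset.mem_univ x⟩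
  have hcard : (univ.filter
      (fun x : Fin 2 → Fin d => ∃ y, f y 0 = x 0 ∨ f y 1 = x 1)).card
      ≤ d ^ 2 - 1 := by
    calc _ ≤ (univ.erase x₀).card := Finset.card_le_card hsub
      _ = d ^ 2 - 1 := by
        rw [Finset.card_erase_of_mem (Finset.mem_univ _), Finset.card_univ,
          card_fun_two]
  have h2 := Finset.card_image_le (f := f) (s := univ)
  simp only [Finset.card_univ, Fintype.card_fin] at h2
  have hd2 : 1 ≤ d ^ 2 := by nlinarith
  rw [sum_maxSim]
  exact add_lt_add_of_lt_of_le (lt_of_le_of_lt hcard (Nat.sub_lt hd2 one_pos)) h2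

lemma value_eq (hd : 2 ≤ d) (g : Fin d → Fin 2 → Fin d) :
    Value 2 d g = ((∑ x : Fin 2 → Fin d, maxSim 2 d g x : ℕ) : ℚ) /
      (2 * (d : ℚ) ^ 2) := by
  rw [Value]
  push_cast
  ring_nf

end Aux

/-- Lemma 4: for `n = 2`, every strategy with Property 2 is
optimal and strictly better than every strategy without Property 2. -/
theorem stmt_7 (d : ℕ) (hd : 2 ≤ d) :
    (∀ g : Fin d → Fin 2 → Fin d, Property2 2 d g → IsOptimal 2 d g) ∧
    (∀ f g : Fin d → Fin 2 → Fin d, ¬ Property2 2 d f → Property2 2 d g →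
      Value 2 d f < Value 2 d g) := by
  have hden : (0 : ℚ) < 2 * (d : ℚ) ^ 2 := by
    have : (0 : ℚ) < (d : ℚ) := by exact_mod_cast lt_of_lt_of_le (by norm_num) hd
    positivity
  constructor
  · intro g hg f
    rw [value_eq hd, value_eq hd]
    have h1 := sum_le f
    have h2 := sum_eq_of_prop2 g hg
    refine (div_le_div_iff_of_pos_right hden).mpr ?_
    exact_mod_cast h2 ▸ h1
  · intro f g hf hg
    rw [value_eq hd, value_eq hd]
    have h1 := sum_lt_of_not_prop2 hd f hf
    have h2 := sum_eq_of_prop2 g hg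
    have hlt : ((∑ x : Fin 2 → Fin d, maxSim 2 d f x : ℕ) : ℚ) <
        ((∑ x : Fin 2 → Fin d, maxSim 2 d g x : ℕ) : ℚ) := by
      exact_mod_cast h2 ▸ h1
    exact (div_lt_div_iff_of_pos_right hden).mpr hlt
end
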